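/- arXiv:2605.29727 — 3 statements merged into one kernel-verified Lean document; each statement's English description precedes it below -/
import Mathlib

section
/- Best-first expansion of a rooted tree with multiplicative path scores in [0,1] selects nodes in globally non-increasing score order: if node i_m is selected before node i_n, then ρ(i_m) ≥ ρ(i_n). -/
/-- A candidate lattice: a rooted tree with multiplicative path scores, where each
node multiplies its parent's score by a weight in [0,1], and the root has score 1. -/
structure ScoreTree (σ : Type) where
  root : σ
  parent : σ → σ
  depth : σ → ℕ
  weight : σ → ℝ
  score : σ → ℝ
  parent_root : parent root = root
  depth_root : depth root = 0
  depth_node : ∀ i, i ≠ root → depth i = depth (parent i) + 1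
  weight_nonneg : ∀ i, 0 ≤ weight i
  weight_le_one : ∀ i, weight i ≤ 1
  score_root : score root = 1
  score_node : ∀ i, i ≠ root → score i = score (parent i) * weight i

lemma ScoreTree.score_mem {σ : Type} (T : ScoreTree σ) (i : σ) :
    0 ≤ T.score i ∧ T.score i ≤ 1 := by
  have key : ∀ d i, T.depth i ≤ d → 0 ≤ T.score i ∧ T.score i ≤ 1 := by
    intro d
    induction d with
    | zero =>
      intro i hi
      by_cases h : i = T.root
      · subst h; simp [T.score_root]
      · have := T.depth_node i h; omega
    | succ d ih =>
      intro i hi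
      by_cases h : i = T.root
      · subst h; simp [T.score_root]
      · have hd := T.depth_node i h
        have hp := ih (T.parent i) (by omega)
        rw [T.score_node i h]
        exact ⟨mul_nonneg hp.1 (T.weight_nonneg i),
          mul_le_one₀ hp.2 (T.weight_nonneg i) (T.weight_le_one i)⟩
  exact key (T.depth i) i le_rfl

lemma ScoreTree.score_le_parent {σ : Type} (T : ScoreTree σ) (i : σ) :
    T.score i ≤ T.score (T.parent i) := by
  by_cases h : i = T.root
  · subst h; rw [T.parent_root]
  · rw [T.score_node i h]
    calc T.score (T.parent i) * T.weight i ≤ T.score (T.parent i) * 1 :=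
          mul_le_mul_of_nonneg_left (T.weight_le_one i) (T.score_mem _).1
      _ = T.score (T.parent i) := mul_one _

/-- Best-first expansion (start at the root, repeatedly add the available node of
maximal score, where a node is available if its parent has already been added)
selects nodes in globally non-increasing score order: if node sel m is selected
before sel n, then ρ(sel m) ≥ ρ(sel n). -/
theorem stmt6 {σ : Type} (T : ScoreTree σ) (sel : ℕ → σ)
    (hsel0 : sel 0 = T.root)
    (hinj : Function.Injective sel)
    (havail : ∀ n, 0 < n → ∃ k < n, sel k = T.parent (sel n))
    (hmax : ∀ n, 0 < n → ∀ j, (∀ k < n, sel k ≠ j) → (∃ k < n, sel k = T.parent j) →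
      T.score j ≤ T.score (sel n))
    (m n : ℕ) (hmn : m ≤ n) :
    T.score (sel n) ≤ T.score (sel m) := by
  have step : ∀ n : ℕ, T.score (sel (n + 1)) ≤ T.score (sel n) := by
    intro n
    rcases Nat.eq_zero_or_pos n with rfl | hn
    · rw [hsel0, T.score_root]
      exact (T.score_mem _).2
    · obtain ⟨k, hk, hks⟩ := havail (n + 1) (by omega)
      rcases Nat.lt_or_ge k n with hkn | hkn
      · apply hmax n hn (sel (n + 1))
        · intro l hl hls
          exact absurd (hinj hls) (by omega)
        · exact ⟨k, hkn, hks⟩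
      · have : k = n := by omega
        subst this
        rw [hks]
        exact T.score_le_parent _
  induction n, hmn using Nat.le_induction with
  | base => exact le_rfl
  | succ n hmn ih => exact (step n).trans ih
end

section
/- For every N, the first N nodes selected by best-first expansion form a prefix-closed subtree that maximizes the sum of path scores Σ_{i∈T} ρ(i) among all prefix-closed subtrees of size N of the candidate lattice. -/
/-- For every N > 0, the first N nodes selected by best-first expansion form a
prefix-closed subtree that maximizes the sum of path scores among all
prefix-closed subtrees of size N of the candidate lattice. -/
theorem stmt7 {σ : Type} [DecidableEq σ] (T : ScoreTree σ) (sel : ℕ → σ)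
    (hsel0 : sel 0 = T.root)
    (hinj : Function.Injective sel)
    (havail : ∀ n, 0 < n → ∃ k < n, sel k = T.parent (sel n))
    (hmax : ∀ n, 0 < n → ∀ j, (∀ k < n, sel k ≠ j) → (∃ k < n, sel k = T.parent j) →
      T.score j ≤ T.score (sel n))
    (N : ℕ) (hN : 0 < N) :
    (T.root ∈ (Finset.range N).image sel ∧
      ∀ i ∈ (Finset.range N).image sel, T.parent i ∈ (Finset.range N).image sel) ∧
    ∀ S : Finset σ, T.root ∈ S → (∀ i ∈ S, T.parent i ∈ S) → S.card = N →
      ∑ i ∈ S, T.score i ≤ ∑ i ∈ (Finset.range N).image sel, T.score i := by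
  classical
  -- scores are nonnegative
  have hscore_nonneg : ∀ i, 0 ≤ T.score i := by
    intro i
    induction' hd : T.depth i with d ih generalizing i
    · by_cases hi : i = T.root
      · rw [hi, T.score_root]; norm_num
      · exact absurd (T.depth_node i hi) (by omega)
    · by_cases hi : i = T.root
      · rw [hi, T.score_root]; norm_num
      · have hdp : T.depth (T.parent i) = d := by
          have := T.depth_node i hi; omega
        rw [T.score_node i hi]
        exact mul_nonneg (ih _ hdp) (T.weight_nonneg i)
  have hscore_parent : ∀ i, i ≠ T.root → T.score i ≤ T.score (T.parent i) := by
    intro i hi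
    rw [T.score_node i hi]
    calc T.score (T.parent i) * T.weight i ≤ T.score (T.parent i) * 1 :=
          mul_le_mul_of_nonneg_left (T.weight_le_one i) (hscore_nonneg _)
      _ = T.score (T.parent i) := mul_one _
  set A : Finset σ := (Finset.range N).image sel with hA
  have hrootA : T.root ∈ A := by
    rw [hA]
    exact Finset.mem_image.mpr ⟨0, Finset.mem_range.mpr hN, hsel0⟩
  have hclosed : ∀ i ∈ A, T.parent i ∈ A := by
    intro i hi
    rcases Finset.mem_image.mp hi with ⟨n, hn, rfl⟩
    rw [Finset.mem_range] at hn
    rcases Nat.eq_zero_or_pos n with rfl | hnpos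
    · rw [hsel0, T.parent_root]; exact hrootA
    · rcases havail n hnpos with ⟨k, hk, hks⟩
      exact Finset.mem_image.mpr ⟨k, Finset.mem_range.mpr (lt_trans hk hn), hks⟩
  refine ⟨⟨hrootA, hclosed⟩, ?_⟩
  intro S hrootS hSclosed hScard
  -- monotonicity of selected scores
  have hstep : ∀ n, T.score (sel (n + 1)) ≤ T.score (sel n) := by
    intro n
    rcases havail (n + 1) (Nat.succ_pos n) with ⟨k, hk, hks⟩
    have hne : sel (n + 1) ≠ T.root := by
      intro h
      exact (Nat.succ_ne_zero n) (hinj (h.trans hsel0.symm))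
    by_cases hkn : k = n
    · calc T.score (sel (n + 1)) ≤ T.score (T.parent (sel (n + 1))) :=
            hscore_parent _ hne
        _ = T.score (sel n) := by rw [← hks, hkn]
    · have hkn' : k < n := by omega
      have hn0 : 0 < n := by omega
      exact hmax n hn0 (sel (n + 1)) (fun m hm h => by
          have := hinj h; omega) ⟨k, hkn', hks⟩
  have hanti : ∀ m n, m ≤ n → T.score (sel n) ≤ T.score (sel m) := by
    intro m n h
    induction' h with n h ih
    · exact le_refl _
    · exact le_trans (hstep n) ih
  set c : ℝ := T.score (sel (N - 1)) with hc
  -- every element of A \ S has score ≥ c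
  have hAS : ∀ i ∈ A \ S, c ≤ T.score i := by
    intro i hi
    rcases Finset.mem_image.mp (Finset.mem_sdiff.mp hi).1 with ⟨n, hn, rfl⟩
    rw [Finset.mem_range] at hn
    exact hanti n (N - 1) (by omega)
  -- every element of S \ A has score ≤ c
  have hSA : ∀ j ∈ S \ A, T.score j ≤ c := by
    intro j hj
    rw [Finset.mem_sdiff] at hj
    -- climb to the first ancestor whose parent is in A
    have climb : ∀ d j, T.depth j = d → j ∈ S → j ∉ A →
        ∃ j', j' ∉ A ∧ T.parent j' ∈ A ∧ T.score j ≤ T.score j' := by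
      intro d
      induction' d using Nat.strong_induction_on with d ih
      intro j hd hjS hjA
      have hjr : j ≠ T.root := fun h => hjA (h ▸ hrootA)
      by_cases hp : T.parent j ∈ A
      · exact ⟨j, hjA, hp, le_refl _⟩
      · have hdp : T.depth (T.parent j) < d := by
          have := T.depth_node j hjr; omega
        rcases ih _ hdp (T.parent j) rfl (hSclosed j hjS) hp with ⟨j', h1, h2, h3⟩
        exact ⟨j', h1, h2, le_trans (hscore_parent j hjr) h3⟩
    rcases climb (T.depth j) j rfl hj.1 hj.2 with ⟨j', hj'A, hpA, hle⟩
    rcases Finset.mem_image.mp hpA with ⟨k, hk, hks⟩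
    rw [Finset.mem_range] at hk
    have hnotsel : ∀ m < N, sel m ≠ j' := by
      intro m hm h
      exact hj'A (h ▸ Finset.mem_image.mpr ⟨m, Finset.mem_range.mpr hm, rfl⟩)
    have hj'r : j' ≠ T.root := by
      intro h; exact hnotsel 0 hN (hsel0.trans h.symm)
    by_cases hkN : k = N - 1
    · calc T.score j ≤ T.score j' := hle
        _ ≤ T.score (T.parent j') := hscore_parent _ hj'r
        _ = c := by rw [← hks, hkN]
    · have hk' : k < N - 1 := by omega
      have hN1 : 0 < N - 1 := by omega
      calc T.score j ≤ T.score j' := hle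
        _ ≤ c := hmax (N - 1) hN1 j' (fun m hm => hnotsel m (by omega))
              ⟨k, hk', hks⟩
  -- card bookkeeping
  have hAcard : A.card = N := by
    rw [hA, Finset.card_image_of_injective _ hinj, Finset.card_range]
  have hcard_eq : (S \ A).card = (A \ S).card := by
    have h1 : (S \ A).card + (S ∩ A).card = S.card := Finset.card_sdiff_add_card_inter S A
    have h2 : (A \ S).card + (A ∩ S).card = A.card := Finset.card_sdiff_add_card_inter A S
    rw [Finset.inter_comm] at h2
    omega
  have hsum1 : ∑ i ∈ S \ A, T.score i ≤ (S \ A).card • c :=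
    Finset.sum_le_card_nsmul _ _ _ hSA
  have hsum2 : (A \ S).card • c ≤ ∑ i ∈ A \ S, T.score i :=
    Finset.card_nsmul_le_sum _ _ _ hAS
  have key : ∑ i ∈ S \ A, T.score i ≤ ∑ i ∈ A \ S, T.score i := by
    rw [hcard_eq] at hsum1
    exact le_trans hsum1 hsum2
  have hS' : ∑ i ∈ S, T.score i = ∑ i ∈ S ∩ A, T.score i + ∑ i ∈ S \ A, T.score i :=
    (Finset.sum_inter_add_sum_sdiff S A _).symm
  have hA' : ∑ i ∈ A, T.score i = ∑ i ∈ A ∩ S, T.score i + ∑ i ∈ A \ S, T.score i :=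
    (Finset.sum_inter_add_sum_sdiff A S _).symm
  rw [hS', hA', Finset.inter_comm]
  exact add_le_add_right key _
end

section
/- Let Â : {1,...,N_max} → ℝ be concave (in the discrete sense of non-increasing increments), non-decreasing, and nonnegative, and let C : {1,...,N_max} → ℝ be convex (non-decreasing increments) and strictly positive. Then S(N) = Â(N)/C(N) is unimodal on {1,...,N_max}. -/
lemma stmt14_step (A C : ℕ → ℝ) (k : ℕ)
    (hconc : A (k+2) - A (k+1) ≤ A (k+1) - A k)
    (hA1 : 0 ≤ A (k+1))
    (hconv : C (k+1) - C k ≤ C (k+2) - C (k+1))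
    (hp : 0 < C k) (hq : 0 < C (k+1)) (hr : 0 < C (k+2))
    (h : A (k+1) / C (k+1) ≤ A k / C k) :
    A (k+2) / C (k+2) ≤ A (k+1) / C (k+1) := by
  rw [div_le_div_iff₀ hq hp] at h
  rw [div_le_div_iff₀ hr hq]
  nlinarith [mul_le_mul_of_nonneg_right
      (show A (k+2) ≤ 2*A (k+1) - A k by linarith) hq.le,
    mul_nonneg hA1 (show (0:ℝ) ≤ C (k+2) - 2*C (k+1) + C k by linarith)]

lemma stmt14_chain_mono (f : ℕ → ℝ) (a b : ℕ)
    (h : ∀ j, a ≤ j → j + 1 ≤ b → f j ≤ f (j+1)) :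
    ∀ m n, a ≤ m → m ≤ n → n ≤ b → f m ≤ f n := by
  intro m n ham hmn hnb
  induction n, hmn using Nat.le_induction with
  | base => exact le_refl _
  | succ n hmn ih =>
    exact le_trans (ih (by omega)) (h n (le_trans ham hmn) hnb)

lemma stmt14_chain_anti (f : ℕ → ℝ) (a b : ℕ)
    (h : ∀ j, a ≤ j → j + 1 ≤ b → f (j+1) ≤ f j) :
    ∀ m n, a ≤ m → m ≤ n → n ≤ b → f n ≤ f m := by
  intro m n ham hmn hnb
  induction n, hmn using Nat.le_induction with
  | base => exact le_refl _
  | succ n hmn ih =>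
    exact le_trans (h n (le_trans ham hmn) hnb) (ih (by omega))

/-- If Â : {1,…,Nmax} → ℝ is discretely concave (non-increasing increments),
non-decreasing and nonnegative, and C : {1,…,Nmax} → ℝ is discretely convex
(non-decreasing increments) and strictly positive, then S(N) = Â(N)/C(N) is
unimodal on {1,…,Nmax}: non-decreasing up to some N* and non-increasing after. -/
theorem stmt14 (Nmax : ℕ) (hNmax : 1 ≤ Nmax) (A C : ℕ → ℝ)
    (hAconc : ∀ k, 1 ≤ k → k + 2 ≤ Nmax → A (k + 2) - A (k + 1) ≤ A (k + 1) - A k)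
    (hAmono : ∀ m n, 1 ≤ m → m ≤ n → n ≤ Nmax → A m ≤ A n)
    (hA0 : ∀ k, 1 ≤ k → k ≤ Nmax → 0 ≤ A k)
    (hCconv : ∀ k, 1 ≤ k → k + 2 ≤ Nmax → C (k + 1) - C k ≤ C (k + 2) - C (k + 1))
    (hC0 : ∀ k, 1 ≤ k → k ≤ Nmax → 0 < C k) :
    ∃ Nstar, 1 ≤ Nstar ∧ Nstar ≤ Nmax ∧
      (∀ m n, 1 ≤ m → m ≤ n → n ≤ Nstar → A m / C m ≤ A n / C n) ∧
      (∀ m n, Nstar ≤ m → m ≤ n → n ≤ Nmax → A n / C n ≤ A m / C m) := by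
  classical
  set S : ℕ → ℝ := fun k => A k / C k with hS
  have hex : ∃ n, Nmax ≤ n + 1 ∨ S (n+2) ≤ S (n+1) := ⟨Nmax - 1, Or.inl (by omega)⟩
  set n0 := Nat.find hex with hn0
  have hn0le : n0 ≤ Nmax - 1 := Nat.find_le (Or.inl (by omega))
  refine ⟨n0 + 1, by omega, by omega, ?_, ?_⟩
  · -- nondecreasing up to n0+1
    refine stmt14_chain_mono S 1 (n0+1) ?_
    intro j hj1 hjb
    have hmin := Nat.find_min hex (m := j - 1) (by omega)
    push_neg at hmin
    have : j - 1 + 2 = j + 1 := by omega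
    have := hmin.2
    rw [show j - 1 + 2 = j + 1 by omega, show j - 1 + 1 = j by omega] at this
    exact this.le
  · -- nonincreasing from n0+1
    refine stmt14_chain_anti S (n0+1) Nmax ?_
    -- prove by induction on the distance from n0+1
    have key : ∀ d, n0 + 1 + d + 1 ≤ Nmax → S (n0 + 1 + d + 1) ≤ S (n0 + 1 + d) := by
      intro d
      induction d with
      | zero =>
        intro hle
        have hspec := Nat.find_spec hex
        rcases hspec with h | h
        · omega
        · simpa using h
      | succ d ih =>
        intro hle
        have hprev : S (n0 + 1 + d + 1) ≤ S (n0 + 1 + d) := ih (by omega)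
        have hk1 : (1:ℕ) ≤ n0 + 1 + d := by omega
        have hk2 : n0 + 1 + d + 2 ≤ Nmax := by omega
        have := stmt14_step A C (n0 + 1 + d)
          (hAconc _ hk1 hk2)
          (hA0 _ (by omega) (by omega))
          (hCconv _ hk1 hk2)
          (hC0 _ (by omega) (by omega)) (hC0 _ (by omega) (by omega))
          (hC0 _ (by omega) (by omega)) hprev
        simpa [show n0 + 1 + d + 2 = n0 + 1 + (d+1) + 1 by ring,
               show n0 + 1 + d + 1 = n0 + 1 + (d+1) by ring] using this
    intro j hj hjb
    have := key (j - (n0+1)) (by omega)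
    rw [show n0 + 1 + (j - (n0+1)) = j by omega] at this
    exact this
end
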